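/- Let M be a metric space, μ a compactly supported probability measure with supp μ ⊆ B(a, R). If α = (a₁,…,aₙ) ∈ M^n has some coordinate aᵢ with d(a, aᵢ) > 2R, then the n-tuple α' obtained from α by replacing aᵢ with a satisfies F_{n,p}(α') ≤ F_{n,p}(α). -/
import Mathlib


open MeasureTheory

/-- The distortion function of order `p`:
`F_{n,p}(a₁, …, aₙ) = ∫ min_{1 ≤ i ≤ n} d(x, aᵢ)^p dμ(x)`. -/
noncomputable def distortionFn {M : Type*} [MetricSpace M] [MeasurableSpace M]
    (μ : Measure M) (p : ℝ) (n : ℕ) (α : Fin n → M) : ℝ :=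
  ∫ x, (⨅ i, dist x (α i)) ^ p ∂μ

/-- If `μ` is a probability measure supported in the ball `B(a, R)` and the center `aᵢ`
satisfies `d(a, aᵢ) > 2R`, then replacing `aᵢ` by `a` does not increase the distortion:
`F_{n,p}(α') ≤ F_{n,p}(α)` where `α' = (a₁, …, a, …, aₙ)`. -/
theorem stmt5 {M : Type*} [MetricSpace M] [MeasurableSpace M] [BorelSpace M]
    (μ : Measure M) [IsProbabilityMeasure μ] (p : ℝ) (hp : 1 ≤ p) (n : ℕ)
    (a : M) (R : ℝ) (hR : 0 < R) (hμ : μ (Metric.ball a R)ᶜ = 0)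
    (α : Fin n → M) (i : Fin n) (hi : 2 * R < dist a (α i)) :
    distortionFn μ p n (Function.update α i a) ≤ distortionFn μ p n α := by
  haveI : Nonempty (Fin n) := ⟨i⟩
  have hp0 : 0 ≤ p := le_trans zero_le_one hp
  have hball : ∀ᵐ x ∂μ, x ∈ Metric.ball a R := by
    rw [ae_iff]
    exact hμ
  -- nonnegativity of infima
  have hinf_nonneg : ∀ (β : Fin n → M) (x : M), 0 ≤ ⨅ j, dist x (β j) := fun β x =>
    le_ciInf fun j => dist_nonneg
  have hbdd : ∀ (β : Fin n → M) (x : M), BddBelow (Set.range fun j => dist x (β j)) :=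
    fun β x => ⟨0, by rintro _ ⟨j, rfl⟩; exact dist_nonneg⟩
  -- measurability
  have hmeas : ∀ β : Fin n → M, Measurable fun x : M => (⨅ j, dist x (β j)) ^ p := by
    intro β
    have h1 : Measurable fun x : M => ⨅ j, dist x (β j) :=
      Measurable.iInf fun j => (continuous_id.dist continuous_const).measurable
    have h2 : Continuous fun y : ℝ => y ^ p :=
      continuous_iff_continuousAt.mpr fun y => Real.continuousAt_rpow_const y p (Or.inr hp0)
    exact h2.measurable.comp h1
  -- integrability of the right-hand integrand
  have hInt : Integrable (fun x : M => (⨅ j, dist x (α j)) ^ p) μ := by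
    refine Integrable.mono' (integrable_const ((R + dist a (α i)) ^ p))
      (hmeas α).aestronglyMeasurable ?_
    filter_upwards [hball] with x hx
    rw [Real.norm_eq_abs, abs_of_nonneg (Real.rpow_nonneg (hinf_nonneg α x) p)]
    apply Real.rpow_le_rpow (hinf_nonneg α x) _ hp0
    calc ⨅ j, dist x (α j) ≤ dist x (α i) := ciInf_le (hbdd α x) i
      _ ≤ dist x a + dist a (α i) := dist_triangle _ _ _
      _ ≤ R + dist a (α i) := by
          have := Metric.mem_ball.mp hx
          linarith
  -- pointwise comparison a.e.
  refine integral_mono_of_nonneg ?_ hInt ?_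
  · filter_upwards with x
    exact Real.rpow_nonneg (hinf_nonneg _ x) p
  · filter_upwards [hball] with x hx
    apply Real.rpow_le_rpow (hinf_nonneg _ x) _ hp0
    refine le_ciInf fun j => ?_
    by_cases hj : j = i
    · subst hj
      have hxa : dist x a < R := Metric.mem_ball.mp hx
      have hxi : R < dist x (α j) := by
        have := dist_triangle a x (α j)
        rw [dist_comm a x] at this
        linarith
      calc (⨅ k, dist x (Function.update α j a k)) ≤ dist x (Function.update α j a j) :=
            ciInf_le (hbdd _ x) j
        _ = dist x a := by rw [Function.update_self]
        _ ≤ dist x (α j) := le_of_lt (lt_trans hxa hxi)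
    · calc (⨅ k, dist x (Function.update α i a k)) ≤ dist x (Function.update α i a j) :=
            ciInf_le (hbdd _ x) j
        _ = dist x (α j) := by rw [Function.update_of_ne hj]
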